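/- Let e be a finite Borel measure on [0, ∞) and let α > 1. Suppose there exists C > 0 such that for all δ > 0, ∫_{[0,δ]} λ^{−1} de(λ) ≤ C δ^{α − 1}. Then there exists C′ > 0 such that for all μ > 0: ∫ (λ + μ)^{−2} de(λ) ≤ C′ μ^{α − 2} if α < 2; ∫ (λ + μ)^{−2} de(λ) ≤ C′ max(1, ln(1/μ)) if α = 2; ∫ (λ + μ)^{−2} de(λ) ≤ C′ if α > 2. -/

import Mathlib

open MeasureTheory ENNReal
open scoped ENNReal

private lemma Dmeas : Measurable (fun l : ℝ => (ENNReal.ofReal l)⁻¹) :=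
  ENNReal.measurable_ofReal.inv

/-- Layer-cake representation of the tail integral. -/
private lemma tail_layercake (e : Measure ℝ) (μ : ℝ) (hμ : 0 < μ) :
    ∫⁻ l in Set.Ioi μ, (ENNReal.ofReal l)⁻¹ * (ENNReal.ofReal l)⁻¹ ∂e
      = ∫⁻ t in Set.Ioi (0:ℝ),
          (e.withDensity (fun l => (ENNReal.ofReal l)⁻¹)) ({a : ℝ | t < a⁻¹} ∩ Set.Ioi μ) := by
  set ν := e.withDensity (fun l => (ENNReal.ofReal l)⁻¹) with hν
  have h1 : ∫⁻ l in Set.Ioi μ, (ENNReal.ofReal l)⁻¹ * (ENNReal.ofReal l)⁻¹ ∂e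
      = ∫⁻ l in Set.Ioi μ, (ENNReal.ofReal l)⁻¹ ∂ν := by
    rw [hν, restrict_withDensity measurableSet_Ioi,
      lintegral_withDensity_eq_lintegral_mul _ Dmeas Dmeas]
    rfl
  have h2 : ∫⁻ l in Set.Ioi μ, (ENNReal.ofReal l)⁻¹ ∂ν
      = ∫⁻ l in Set.Ioi μ, ENNReal.ofReal l⁻¹ ∂ν := by
    refine setLIntegral_congr_fun measurableSet_Ioi (fun l hl => ?_)
    exact (ENNReal.ofReal_inv_of_pos (hμ.trans hl)).symm
  have h3 := lintegral_eq_lintegral_meas_lt (ν.restrict (Set.Ioi μ))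
      (f := fun a : ℝ => a⁻¹)
      (ae_restrict_of_forall_mem measurableSet_Ioi fun x hx => (inv_pos.mpr (hμ.trans hx)).le)
      measurable_inv.aemeasurable
  rw [h1, h2, h3]
  refine lintegral_congr fun t => ?_
  rw [Measure.restrict_apply (measurableSet_lt measurable_const measurable_inv)]

private lemma calc1 (C α : ℝ) (hC : 0 ≤ C) (hα : α < 2) (b : ℝ) (hb : 0 ≤ b) :
    ∫⁻ t in Set.Ioc (0:ℝ) b, ENNReal.ofReal (C * t ^ (1 - α)) =
      ENNReal.ofReal (C * b ^ (2 - α) / (2 - α)) := by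
  have hr : (-1:ℝ) < 1 - α := by linarith
  have hint : IntegrableOn (fun t : ℝ => C * t ^ (1-α)) (Set.Ioc 0 b) :=
    (intervalIntegrable_iff_integrableOn_Ioc_of_le hb).mp
      ((intervalIntegral.intervalIntegrable_rpow' hr).const_mul C)
  rw [← ofReal_integral_eq_lintegral_ofReal hint
      (ae_restrict_of_forall_mem measurableSet_Ioc fun t ht =>
        mul_nonneg hC (Real.rpow_nonneg ht.1.le _))]
  congr 1
  rw [← intervalIntegral.integral_of_le hb, intervalIntegral.integral_const_mul,
    integral_rpow (Or.inl hr)]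
  have h2 : (1 - α) + 1 = 2 - α := by ring
  rw [h2, Real.zero_rpow (by linarith : (2-α) ≠ 0)]
  ring

private lemma calc2 (C : ℝ) (hC : 0 ≤ C) (b : ℝ) (hb : 1 ≤ b) :
    ∫⁻ t in Set.Ioc (1:ℝ) b, ENNReal.ofReal (C * t⁻¹) =
      ENNReal.ofReal (C * Real.log b) := by
  have h0 : ∀ x : ℝ, x ∈ Set.uIcc 1 b → id x ≠ 0 := by
    rw [Set.uIcc_of_le hb]
    intro x hx hx0
    simp only [id_eq] at hx0
    rw [Set.mem_Icc] at hx
    linarith [hx.1]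
  have hint : IntegrableOn (fun t : ℝ => C * t⁻¹) (Set.Ioc 1 b) :=
    (intervalIntegrable_iff_integrableOn_Ioc_of_le hb).mp
      ((intervalIntegral.intervalIntegrable_inv h0 continuousOn_id).const_mul C)
  rw [← ofReal_integral_eq_lintegral_ofReal hint
      (ae_restrict_of_forall_mem measurableSet_Ioc fun t ht =>
        mul_nonneg hC (inv_nonneg.mpr (by linarith [ht.1] : (0:ℝ) ≤ t)))]
  congr 1
  rw [← intervalIntegral.integral_of_le hb, intervalIntegral.integral_const_mul,
    integral_inv (by rw [Set.uIcc_of_le hb]; rintro ⟨h1, h2⟩; linarith), div_one]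

private lemma calc3 (C α : ℝ) (hC : 0 ≤ C) (hα : 2 < α) :
    ∫⁻ t in Set.Ioi (1:ℝ), ENNReal.ofReal (C * t ^ (1 - α)) =
      ENNReal.ofReal (C / (α - 2)) := by
  have hr : (1 - α) < -1 := by linarith
  have hint : IntegrableOn (fun t : ℝ => C * t ^ (1-α)) (Set.Ioi 1) :=
    (integrableOn_Ioi_rpow_of_lt hr one_pos).const_mul C
  rw [← ofReal_integral_eq_lintegral_ofReal hint
      (ae_restrict_of_forall_mem measurableSet_Ioi fun t ht =>
        mul_nonneg hC (Real.rpow_nonneg (by linarith [Set.mem_Ioi.mp ht] : (0:ℝ) ≤ t) _))]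
  congr 1
  rw [MeasureTheory.integral_const_mul, integral_Ioi_rpow_of_lt hr one_pos]
  have h2 : (1 - α) + 1 = -(α - 2) := by ring
  rw [h2, Real.one_rpow, neg_div_neg_eq, mul_one_div]


private noncomputable def nu (e : Measure ℝ) : Measure ℝ := e.withDensity fun l => (ENNReal.ofReal l)⁻¹

private lemma tail_layercake' (e : Measure ℝ) (μ : ℝ) (hμ : 0 < μ) :
    ∫⁻ l in Set.Ioi μ, (ENNReal.ofReal l)⁻¹ * (ENNReal.ofReal l)⁻¹ ∂e
      = ∫⁻ t in Set.Ioi (0:ℝ), nu e ({a : ℝ | t < a⁻¹} ∩ Set.Ioi μ) :=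
  tail_layercake e μ hμ

/-- Second moment of the regularized corrector: if the finite Borel measure `e` on `[0, ∞)`
satisfies `∫_{[0,δ]} λ⁻¹ de(λ) ≤ C δ^{α-1}` for all `δ > 0`, then
`∫ (λ+μ)^{-2} de(λ) ≤ C' μ^{α-2}` if `α < 2`, `≤ C' ln_+(1/μ)` if `α = 2`, `≤ C'` if `α > 2`. -/
theorem resolvent_second_moment_bounds
    (e : Measure ℝ) [IsFiniteMeasure e] (he : e (Set.Iio 0) = 0)
    (α : ℝ) (hα : 1 < α) (C : ℝ) (hC : 0 < C)
    (h : ∀ δ : ℝ, 0 < δ →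
      ∫⁻ l in Set.Icc (0 : ℝ) δ, (ENNReal.ofReal l)⁻¹ ∂e ≤
        ENNReal.ofReal (C * δ ^ (α - 1))) :
    ∃ C' : ℝ, 0 < C' ∧ ∀ μ : ℝ, 0 < μ →
      (α < 2 → ∫ l, ((l + μ) ^ 2)⁻¹ ∂e ≤ C' * μ ^ (α - 2)) ∧
      (α = 2 → ∫ l, ((l + μ) ^ 2)⁻¹ ∂e ≤ C' * max 1 (Real.log (1 / μ))) ∧
      (2 < α → ∫ l, ((l + μ) ^ 2)⁻¹ ∂e ≤ C') := by
  classical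
  set E : ℝ := (e Set.univ).toReal with hEdef
  have hE0 : (0:ℝ) ≤ E := ENNReal.toReal_nonneg
  have hEeq : e Set.univ = ENNReal.ofReal E :=
    (ENNReal.ofReal_toReal (measure_ne_top e _)).symm
  have hinv : ∀ t : ℝ, 0 < t → ∀ s : ℝ, (t⁻¹) ^ s = t ^ (-s) := by
    intro t ht s
    rw [Real.inv_rpow ht.le, Real.rpow_neg ht.le]
  -- ν on intervals
  have hνIcc : ∀ δ : ℝ, 0 < δ → nu e (Set.Icc 0 δ) ≤ ENNReal.ofReal (C * δ ^ (α - 1)) := by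
    intro δ hδ
    rw [nu, withDensity_apply _ measurableSet_Icc]
    exact h δ hδ
  -- total mass of ν
  have hνtot : nu e Set.univ ≤ ENNReal.ofReal (C + E) := by
    have h1 : nu e Set.univ = ∫⁻ l, (ENNReal.ofReal l)⁻¹ ∂e := by
      rw [nu, withDensity_apply _ MeasurableSet.univ, Measure.restrict_univ]
    rw [h1, ← lintegral_add_compl (fun l => (ENNReal.ofReal l)⁻¹)
      (measurableSet_Icc (a := (0:ℝ)) (b := 1))]
    have hc1 : ∫⁻ l in Set.Icc (0:ℝ) 1, (ENNReal.ofReal l)⁻¹ ∂e ≤ ENNReal.ofReal C := by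
      simpa using h 1 one_pos
    have hsub : (Set.Icc (0:ℝ) 1)ᶜ ⊆ Set.Iio 0 ∪ Set.Ioi 1 := by
      intro x hx
      rw [Set.mem_compl_iff, Set.mem_Icc, not_and_or, not_le, not_le] at hx
      exact hx
    have hc2 : ∫⁻ l in (Set.Icc (0:ℝ) 1)ᶜ, (ENNReal.ofReal l)⁻¹ ∂e ≤ ENNReal.ofReal E := by
      refine le_trans (lintegral_mono_set hsub) ?_
      refine le_trans (lintegral_union_le _ _ _) ?_
      rw [setLIntegral_measure_zero _ _ he, zero_add]
      refine le_trans (setLIntegral_mono (g := fun _ => (1:ℝ≥0∞)) measurable_const fun x hx => ?_) ?_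
      · exact ENNReal.inv_le_one.mpr (ENNReal.one_le_ofReal.mpr
          (le_of_lt (Set.mem_Ioi.mp hx)))
      · rw [setLIntegral_one, ← hEeq]
        exact measure_mono (Set.subset_univ _)
    calc _ ≤ ENNReal.ofReal C + ENNReal.ofReal E := add_le_add hc1 hc2
      _ = ENNReal.ofReal (C + E) := (ENNReal.ofReal_add hC.le hE0).symm
  -- real/lintegral conversion
  have hreal : ∀ μ : ℝ, ∀ B : ℝ, 0 ≤ B →
      (∫⁻ l, ENNReal.ofReal (((l + μ) ^ 2)⁻¹) ∂e ≤ ENNReal.ofReal B) →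
      ∫ l, ((l + μ) ^ 2)⁻¹ ∂e ≤ B := by
    intro μ B hB hle
    rw [integral_eq_lintegral_of_nonneg_ae (ae_of_all _ fun l => by positivity)
      ((by fun_prop : Measurable (fun l : ℝ => ((l + μ) ^ 2)⁻¹)).aestronglyMeasurable)]
    exact ENNReal.toReal_le_of_le_ofReal hB hle
  -- decomposition
  have hdecomp : ∀ μ : ℝ, 0 < μ →
      ∫⁻ l, ENNReal.ofReal (((l + μ) ^ 2)⁻¹) ∂e ≤
        ∫⁻ l in Set.Icc 0 μ, ENNReal.ofReal (((l + μ) ^ 2)⁻¹) ∂e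
        + ∫⁻ l in Set.Ioi μ, ENNReal.ofReal (((l + μ) ^ 2)⁻¹) ∂e := by
    intro μ hμ
    rw [← lintegral_add_compl (fun l => ENNReal.ofReal (((l + μ) ^ 2)⁻¹))
      (measurableSet_Ici (a := (0:ℝ))), Set.compl_Ici,
      setLIntegral_measure_zero _ _ he, add_zero, ← Set.Icc_union_Ioi_eq_Ici hμ.le]
    exact lintegral_union_le _ _ _
  -- head bound
  have hhead : ∀ μ : ℝ, 0 < μ →
      ∫⁻ l in Set.Icc 0 μ, ENNReal.ofReal (((l + μ) ^ 2)⁻¹) ∂e ≤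
        ENNReal.ofReal (C * μ ^ (α - 2)) := by
    intro μ hμ
    have hp : ∀ l ∈ Set.Icc (0:ℝ) μ, ENNReal.ofReal (((l + μ) ^ 2)⁻¹)
        ≤ ENNReal.ofReal μ⁻¹ * (ENNReal.ofReal l)⁻¹ := by
      intro l hl
      rcases eq_or_lt_of_le hl.1 with h0 | h0
      · rw [← h0]
        rw [ENNReal.ofReal_zero, ENNReal.inv_zero, ENNReal.mul_top]
        · exact le_top
        · simpa [ENNReal.ofReal_eq_zero, not_le] using inv_pos.mpr hμ
      · have hl2 : ((l + μ) ^ 2)⁻¹ ≤ μ⁻¹ * l⁻¹ := by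
          rw [← mul_inv]
          apply inv_anti₀ (by positivity)
          nlinarith
        calc ENNReal.ofReal (((l + μ) ^ 2)⁻¹) ≤ ENNReal.ofReal (μ⁻¹ * l⁻¹) :=
              ENNReal.ofReal_le_ofReal hl2
          _ = ENNReal.ofReal μ⁻¹ * ENNReal.ofReal l⁻¹ :=
              ENNReal.ofReal_mul (by positivity)
          _ = ENNReal.ofReal μ⁻¹ * (ENNReal.ofReal l)⁻¹ := by
              rw [ENNReal.ofReal_inv_of_pos h0]
    calc ∫⁻ l in Set.Icc 0 μ, ENNReal.ofReal (((l + μ) ^ 2)⁻¹) ∂e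
        ≤ ∫⁻ l in Set.Icc 0 μ, ENNReal.ofReal μ⁻¹ * (ENNReal.ofReal l)⁻¹ ∂e :=
          setLIntegral_mono (measurable_const.mul Dmeas) hp
      _ = ENNReal.ofReal μ⁻¹ * ∫⁻ l in Set.Icc 0 μ, (ENNReal.ofReal l)⁻¹ ∂e :=
          lintegral_const_mul _ Dmeas
      _ ≤ ENNReal.ofReal μ⁻¹ * ENNReal.ofReal (C * μ ^ (α-1)) :=
          mul_le_mul_right (h μ hμ) _
      _ = ENNReal.ofReal (μ⁻¹ * (C * μ ^ (α-1))) :=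
          (ENNReal.ofReal_mul (by positivity)).symm
      _ = ENNReal.ofReal (C * μ ^ (α-2)) := by
          congr 1
          have h1 : μ⁻¹ = μ ^ (-1:ℝ) := (Real.rpow_neg_one μ).symm
          have h2 : μ ^ (-1:ℝ) * μ ^ (α-1) = μ ^ (α-2) := by
            rw [← Real.rpow_add hμ]
            congr 1
            ring
          rw [h1, ← h2]
          ring
  -- tail bound via layer cake
  have htail : ∀ μ : ℝ, 0 < μ →
      ∫⁻ l in Set.Ioi μ, ENNReal.ofReal (((l + μ) ^ 2)⁻¹) ∂e ≤
        ∫⁻ t in Set.Ioi (0:ℝ), nu e ({a : ℝ | t < a⁻¹} ∩ Set.Ioi μ) := by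
    intro μ hμ
    rw [← tail_layercake' e μ hμ]
    refine setLIntegral_mono (Dmeas.mul Dmeas) fun l hl => ?_
    have hl0 : 0 < l := hμ.trans (Set.mem_Ioi.mp hl)
    have hle : ((l + μ) ^ 2)⁻¹ ≤ l⁻¹ * l⁻¹ := by
      rw [← mul_inv]
      apply inv_anti₀ (by positivity)
      nlinarith
    calc ENNReal.ofReal (((l + μ) ^ 2)⁻¹) ≤ ENNReal.ofReal (l⁻¹ * l⁻¹) :=
          ENNReal.ofReal_le_ofReal hle
      _ = ENNReal.ofReal l⁻¹ * ENNReal.ofReal l⁻¹ := ENNReal.ofReal_mul (by positivity)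
      _ = (ENNReal.ofReal l)⁻¹ * (ENNReal.ofReal l)⁻¹ := by
          rw [ENNReal.ofReal_inv_of_pos hl0]
  -- geometry of the superlevel sets
  have hGsub : ∀ μ : ℝ, 0 < μ → ∀ t : ℝ, 0 < t →
      {a : ℝ | t < a⁻¹} ∩ Set.Ioi μ ⊆ Set.Icc 0 t⁻¹ := by
    rintro μ hμ t ht a ⟨hta, hμa⟩
    have ha : 0 < a := hμ.trans (Set.mem_Ioi.mp hμa)
    have htt : t * t⁻¹ = 1 := mul_inv_cancel₀ ht.ne'
    have haa : a⁻¹ * a = 1 := inv_mul_cancel₀ ha.ne'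
    have h1 : t * a < 1 := by
      have := mul_lt_mul_of_pos_right (Set.mem_setOf_eq ▸ hta) ha
      rwa [haa] at this
    refine ⟨ha.le, ?_⟩
    nlinarith
  have hGempty : ∀ μ : ℝ, 0 < μ → ∀ t : ℝ, μ⁻¹ ≤ t →
      {a : ℝ | t < a⁻¹} ∩ Set.Ioi μ = ∅ := by
    intro μ hμ t htb
    rw [Set.eq_empty_iff_forall_notMem]
    rintro a ⟨hta, hμa⟩
    have ha : 0 < a := hμ.trans (Set.mem_Ioi.mp hμa)
    have h2 : a⁻¹ < μ⁻¹ := inv_strictAnti₀ hμ (Set.mem_Ioi.mp hμa)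
    have h3 : t < a⁻¹ := hta
    linarith
  -- bound for large μ
  have hbig : ∀ μ : ℝ, 1 ≤ μ → ∫⁻ l, ENNReal.ofReal (((l + μ) ^ 2)⁻¹) ∂e
      ≤ ENNReal.ofReal E := by
    intro μ hμ1
    rw [← lintegral_add_compl (fun l => ENNReal.ofReal (((l + μ) ^ 2)⁻¹))
      (measurableSet_Ici (a := (0:ℝ))), Set.compl_Ici,
      setLIntegral_measure_zero _ _ he, add_zero]
    refine le_trans (setLIntegral_mono (g := fun _ => (1:ℝ≥0∞)) measurable_const fun x hx => ?_) ?_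
    · rw [← ENNReal.ofReal_one]
      refine ENNReal.ofReal_le_ofReal ?_
      have hx0 : (0:ℝ) ≤ x := hx
      have : (1:ℝ) ≤ (x + μ)^2 := by nlinarith
      simpa using inv_anti₀ one_pos this
    · rw [setLIntegral_one, ← hEeq]
      exact measure_mono (Set.subset_univ _)
  
  -- part1 of the tail split (generic)
  have hpart1 : ∀ μ : ℝ, ∫⁻ t in Set.Ioc (0:ℝ) 1, nu e ({a : ℝ | t < a⁻¹} ∩ Set.Ioi μ)
      ≤ ENNReal.ofReal (C + E) := by
    intro μ
    refine le_trans (lintegral_mono fun t =>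
      le_trans (measure_mono (Set.subset_univ _)) hνtot) ?_
    rw [setLIntegral_const]
    simp [Real.volume_Ioc]
  -- the constant
  have hCp : (0:ℝ) ≤ C / |2 - α| := div_nonneg hC.le (abs_nonneg _)
  refine ⟨3*C + E + C / |2 - α| + 1, by linarith, fun μ hμ => ?_⟩
  refine ⟨fun hα2 => ?_, fun hα2 => ?_, fun hα2 => ?_⟩
  · -- case α < 2
    have habs : |2 - α| = 2 - α := abs_of_pos (by linarith)
    have hb : ∀ t ∈ Set.Ioi (0:ℝ), nu e ({a : ℝ | t < a⁻¹} ∩ Set.Ioi μ) ≤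
        (Set.Ioo (0:ℝ) μ⁻¹).indicator (fun t => ENNReal.ofReal (C * t ^ (1-α))) t := by
      intro t ht
      have ht0 : (0:ℝ) < t := ht
      by_cases htb : t < μ⁻¹
      · rw [Set.indicator_of_mem (Set.mem_Ioo.mpr ⟨ht0, htb⟩)]
        refine le_trans (measure_mono (hGsub μ hμ t ht0)) ?_
        refine le_trans (hνIcc t⁻¹ (inv_pos.mpr ht0)) (le_of_eq ?_)
        congr 1
        rw [hinv t ht0, show -(α-1) = 1 - α by ring]
      · rw [Set.indicator_of_notMem (fun hmem => htb hmem.2),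
          hGempty μ hμ t (not_lt.mp htb)]
        simp
    have hT : ∫⁻ t in Set.Ioi (0:ℝ), nu e ({a : ℝ | t < a⁻¹} ∩ Set.Ioi μ) ≤
        ENNReal.ofReal (C / (2-α) * μ ^ (α-2)) := by
      refine le_trans (setLIntegral_mono
        (Measurable.indicator (by fun_prop) measurableSet_Ioo) hb) ?_
      rw [lintegral_indicator measurableSet_Ioo _,
        Measure.restrict_restrict measurableSet_Ioo,
        Set.inter_eq_left.mpr Set.Ioo_subset_Ioi_self]
      refine le_trans (lintegral_mono_set Set.Ioo_subset_Ioc_self) ?_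
      rw [calc1 C α hC.le hα2 μ⁻¹ (inv_pos.mpr hμ).le]
      refine le_of_eq ?_
      congr 1
      rw [hinv μ hμ, show -(2-α) = α - 2 by ring]
      ring
    have htot : ∫⁻ l, ENNReal.ofReal (((l + μ) ^ 2)⁻¹) ∂e ≤
        ENNReal.ofReal ((C + C/(2-α)) * μ ^ (α-2)) := by
      refine le_trans (hdecomp μ hμ) ?_
      refine le_trans (add_le_add (hhead μ hμ) (le_trans (htail μ hμ) hT)) ?_
      rw [← ENNReal.ofReal_add (mul_nonneg hC.le (Real.rpow_nonneg hμ.le _))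
        (mul_nonneg (div_nonneg hC.le (by linarith)) (Real.rpow_nonneg hμ.le _))]
      refine ENNReal.ofReal_le_ofReal (le_of_eq ?_)
      ring
    have hB0 : (0:ℝ) ≤ (C + C/(2-α)) * μ ^ (α-2) :=
      mul_nonneg (by nlinarith [div_nonneg hC.le (show (0:ℝ) ≤ 2 - α by linarith)]) (Real.rpow_nonneg hμ.le _)
    refine le_trans (hreal μ _ hB0 htot) ?_
    refine mul_le_mul_of_nonneg_right ?_ (Real.rpow_nonneg hμ.le _)
    rw [habs] at hCp ⊢
    linarith
  · -- case α = 2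
    subst hα2
    by_cases hμ1 : 1 ≤ μ
    · have hm : (1:ℝ) ≤ max 1 (Real.log (1/μ)) := le_max_left _ _
      calc ∫ l, ((l + μ) ^ 2)⁻¹ ∂e ≤ E := hreal μ E hE0 (hbig μ hμ1)
        _ ≤ (3*C + E + C/|2-(2:ℝ)| + 1) * 1 := by rw [mul_one]; linarith
        _ ≤ _ := mul_le_mul_of_nonneg_left hm (by linarith)
    · have hμ1' : μ < 1 := not_le.mp hμ1
      have hμinv : (1:ℝ) < μ⁻¹ := by
        have := inv_strictAnti₀ hμ hμ1'
        simpa using this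
      have hlog : (0:ℝ) ≤ Real.log μ⁻¹ := Real.log_nonneg hμinv.le
      have hpart2 : ∫⁻ t in Set.Ioi (1:ℝ), nu e ({a : ℝ | t < a⁻¹} ∩ Set.Ioi μ)
          ≤ ENNReal.ofReal (C * Real.log μ⁻¹) := by
        have hb2 : ∀ t ∈ Set.Ioi (1:ℝ), nu e ({a : ℝ | t < a⁻¹} ∩ Set.Ioi μ) ≤
            (Set.Ioo (1:ℝ) μ⁻¹).indicator (fun t => ENNReal.ofReal (C * t⁻¹)) t := by
          intro t ht
          have ht1 : (1:ℝ) < t := ht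
          have ht0 : (0:ℝ) < t := lt_trans one_pos ht1
          by_cases htb : t < μ⁻¹
          · rw [Set.indicator_of_mem (Set.mem_Ioo.mpr ⟨ht1, htb⟩)]
            refine le_trans (measure_mono (hGsub μ hμ t ht0)) ?_
            refine le_trans (hνIcc t⁻¹ (inv_pos.mpr ht0)) (le_of_eq ?_)
            congr 1
            rw [show (2:ℝ) - 1 = 1 by norm_num, Real.rpow_one]
          · rw [Set.indicator_of_notMem (fun hmem => htb hmem.2),
              hGempty μ hμ t (not_lt.mp htb)]
            simp
        refine le_trans (setLIntegral_mono
          (Measurable.indicator (by fun_prop) measurableSet_Ioo) hb2) ?_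
        rw [lintegral_indicator measurableSet_Ioo _,
          Measure.restrict_restrict measurableSet_Ioo,
          Set.inter_eq_left.mpr Set.Ioo_subset_Ioi_self]
        refine le_trans (lintegral_mono_set Set.Ioo_subset_Ioc_self) ?_
        rw [calc2 C hC.le μ⁻¹ hμinv.le]
      have hTsplit : ∫⁻ t in Set.Ioi (0:ℝ), nu e ({a : ℝ | t < a⁻¹} ∩ Set.Ioi μ)
          ≤ ENNReal.ofReal (C + E) + ENNReal.ofReal (C * Real.log μ⁻¹) := by
        rw [← Set.Ioc_union_Ioi_eq_Ioi (zero_le_one (α := ℝ))]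
        exact le_trans (lintegral_union_le _ _ _) (add_le_add (hpart1 μ) hpart2)
      have htot : ∫⁻ l, ENNReal.ofReal (((l + μ) ^ 2)⁻¹) ∂e ≤
          ENNReal.ofReal (C * μ ^ ((2:ℝ)-2) + ((C + E) + C * Real.log μ⁻¹)) := by
        refine le_trans (hdecomp μ hμ) ?_
        refine le_trans (add_le_add (hhead μ hμ) (le_trans (htail μ hμ) hTsplit)) ?_
        refine le_of_eq ?_
        rw [ENNReal.ofReal_add (mul_nonneg hC.le (Real.rpow_nonneg hμ.le _))
          (add_nonneg (by linarith) (mul_nonneg hC.le hlog)),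
          ENNReal.ofReal_add (by linarith : (0:ℝ) ≤ C + E) (mul_nonneg hC.le hlog)]
      have hB0 : (0:ℝ) ≤ C * μ ^ ((2:ℝ)-2) + ((C + E) + C * Real.log μ⁻¹) := by
        exact add_nonneg (mul_nonneg hC.le (Real.rpow_nonneg hμ.le _))
          (add_nonneg (add_nonneg hC.le hE0) (mul_nonneg hC.le hlog))
      refine le_trans (hreal μ _ hB0 htot) ?_
      rw [show (2:ℝ)-2 = 0 by norm_num, Real.rpow_zero, mul_one, one_div]
      have hm1 : (1:ℝ) ≤ max 1 (Real.log μ⁻¹) := le_max_left _ _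
      have hm2 : Real.log μ⁻¹ ≤ max 1 (Real.log μ⁻¹) := le_max_right _ _
      rw [abs_zero, _root_.div_zero]
      nlinarith [mul_le_mul_of_nonneg_left hm2 hC.le,
        mul_le_mul_of_nonneg_left hm1 (show (0:ℝ) ≤ 2*C + E + 1 by linarith)]
  · -- case 2 < α
    have habs : |2 - α| = α - 2 := by
      rw [abs_of_neg (by linarith)]
      ring
    by_cases hμ1 : 1 ≤ μ
    · calc ∫ l, ((l + μ) ^ 2)⁻¹ ∂e ≤ E := hreal μ E hE0 (hbig μ hμ1)
        _ ≤ 3*C + E + C/|2-α| + 1 := by linarith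
    · have hμ1' : μ < 1 := not_le.mp hμ1
      have hpart2 : ∫⁻ t in Set.Ioi (1:ℝ), nu e ({a : ℝ | t < a⁻¹} ∩ Set.Ioi μ)
          ≤ ENNReal.ofReal (C / (α - 2)) := by
        have hb3 : ∀ t ∈ Set.Ioi (1:ℝ), nu e ({a : ℝ | t < a⁻¹} ∩ Set.Ioi μ) ≤
            ENNReal.ofReal (C * t ^ (1-α)) := by
          intro t ht
          have ht0 : (0:ℝ) < t := lt_trans one_pos ht
          refine le_trans (measure_mono (hGsub μ hμ t ht0)) ?_
          refine le_trans (hνIcc t⁻¹ (inv_pos.mpr ht0)) (le_of_eq ?_)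
          congr 1
          rw [hinv t ht0, show -(α-1) = 1 - α by ring]
        refine le_trans (setLIntegral_mono (by fun_prop) hb3) ?_
        rw [calc3 C α hC.le hα2]
      have hTsplit : ∫⁻ t in Set.Ioi (0:ℝ), nu e ({a : ℝ | t < a⁻¹} ∩ Set.Ioi μ)
          ≤ ENNReal.ofReal (C + E) + ENNReal.ofReal (C / (α - 2)) := by
        rw [← Set.Ioc_union_Ioi_eq_Ioi (zero_le_one (α := ℝ))]
        exact le_trans (lintegral_union_le _ _ _) (add_le_add (hpart1 μ) hpart2)
      have hpow1 : μ ^ (α-2) ≤ 1 := Real.rpow_le_one hμ.le hμ1'.le (by linarith)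
      have htot : ∫⁻ l, ENNReal.ofReal (((l + μ) ^ 2)⁻¹) ∂e ≤
          ENNReal.ofReal (C + ((C + E) + C / (α - 2))) := by
        refine le_trans (hdecomp μ hμ) ?_
        refine le_trans (add_le_add (hhead μ hμ) (le_trans (htail μ hμ) hTsplit)) ?_
        rw [ENNReal.ofReal_add hC.le
            (add_nonneg (by linarith) (div_nonneg hC.le (by linarith))),
          ENNReal.ofReal_add (by linarith : (0:ℝ) ≤ C + E)
            (div_nonneg hC.le (by linarith))]
        refine add_le_add (ENNReal.ofReal_le_ofReal ?_) le_rfl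
        nlinarith [Real.rpow_nonneg hμ.le (α-2)]
      have hB0 : (0:ℝ) ≤ C + ((C + E) + C / (α - 2)) := by
        have := div_nonneg hC.le (show (0:ℝ) ≤ α - 2 by linarith)
        linarith
      refine le_trans (hreal μ _ hB0 htot) ?_
      rw [habs]
      linarith
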